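/- Let Λ be a Bedford–McMullen carpet with non-uniform vertical fibres. Define β : ℝ → ℝ by β(ξ) = (1/log m)·( −ξ·log N + log ∑_{î=1}^M N_î^{γ^{−1} + (1−γ^{−1})·ξ} ) (equivalently, β(ξ) is the unique real with m^{−β(ξ)}·N^{−ξ}·∑_{î=1}^M N_î^{γ^{−1}+(1−γ^{−1})ξ} = 1), and let f(α) = inf_{ξ∈ℝ} ( α·ξ + β(ξ) ). Then for every t ∈ (min_î log N_î, max_î log N_î): I(t) = −(log m)·f( (log N)/(log m) − (1/log m − 1/log n)·t ) + t/γ + log M. -/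

import Mathlib

open Filter Set MeasureTheory
open scoped ENNReal NNReal Topology

noncomputable section

/-- The data defining a Bedford–McMullen carpet: an `m × n` grid with `n > m ≥ 2` and a
nonempty set `A` of selected rectangles, with more than one nonempty column. -/
structure BMData where
  m : ℕ
  n : ℕ
  two_le_m : 2 ≤ m
  m_lt_n : m < n
  A : Finset (Fin m × Fin n)
  A_nonempty : A.Nonempty
  one_lt_cols : 1 < (A.image Prod.fst).card

namespace BMData

variable (C : BMData)

/-- The affine contraction `f_{(i,j)}` associated to a selected rectangle `(i, j) ∈ A`
(with the grid indexed from `0` rather than from `1`). -/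
def map (p : Fin C.m × Fin C.n) (x : ℝ × ℝ) : ℝ × ℝ :=
  (x.1 / C.m + (p.1 : ℝ) / C.m, x.2 / C.n + (p.2 : ℝ) / C.n)

/-- `Λ` is the attractor of the iterated function system: the unique nonempty compact set
satisfying `Λ = ⋃_{p ∈ A} f_p(Λ)`. -/
def IsAttractor (Λ : Set (ℝ × ℝ)) : Prop :=
  Λ.Nonempty ∧ IsCompact Λ ∧ Λ = ⋃ p ∈ C.A, C.map p '' Λ

/-- The (finite set of) nonempty columns. -/
def cols : Finset (Fin C.m) := C.A.image Prod.fst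

/-- `M`, the number of nonempty columns. -/
def M : ℕ := C.cols.card

/-- `N`, the total number of maps. -/
def N : ℕ := C.A.card

/-- The number `N_î` of maps in column `î`. -/
def colCount (i : Fin C.m) : ℕ := (C.A.filter fun p => p.1 = i).card

/-- Non-uniform vertical fibres: the column counts are not all equal. -/
def NonUniform : Prop :=
  ∃ i ∈ C.cols, ∃ j ∈ C.cols, C.colCount i ≠ C.colCount j

/-- `γ = log n / log m`. -/
def gamma : ℝ := Real.log C.n / Real.log C.m

/-- `t̲ = (1/M) ∑_ĵ log N_ĵ`. -/
def tLow : ℝ := (1 / (C.M : ℝ)) * ∑ j ∈ C.cols, Real.log (C.colCount j)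

/-- `t̄ = ∑_ĵ (N_ĵ/N) log N_ĵ`. -/
def tUp : ℝ := ∑ j ∈ C.cols, ((C.colCount j : ℝ) / (C.N : ℝ)) * Real.log (C.colCount j)

/-- The large deviations rate function
`I(t) = sup_λ (λt − log((1/M) ∑_ĵ N_ĵ^λ))`. -/
def rate (t : ℝ) : ℝ :=
  ⨆ l : ℝ, (l * t - Real.log ((1 / (C.M : ℝ)) * ∑ j ∈ C.cols, (C.colCount j : ℝ) ^ l))

/-- The map `T_s(t) = (s − log M/log m)·log n + γ·I(t)`. -/
def T (s t : ℝ) : ℝ :=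
  (s - Real.log C.M / Real.log C.m) * Real.log C.n + C.gamma * C.rate t

/-- The sequence `t_ℓ(s)`, shifted so that `t_L(s) = tseq s (L - 1)`:
`tseq s 0 = t_1(s) = (s − log M/log m)·log n` and `tseq s (k+1) = T_s (tseq s k)`. -/
def tseq (s : ℝ) : ℕ → ℝ
  | 0 => (s - Real.log C.M / Real.log C.m) * Real.log C.n
  | k + 1 => C.T s (tseq s k)

/-- The Hausdorff dimension of the carpet (Bedford–McMullen formula). -/
def dimH : ℝ :=
  (1 / Real.log C.m) *
    Real.log (∑ j ∈ C.cols, (C.colCount j : ℝ) ^ (Real.log C.m / Real.log C.n))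

/-- The box dimension of the carpet (Bedford–McMullen formula). -/
def dimB : ℝ :=
  Real.log C.N / Real.log C.n + (1 - Real.log C.m / Real.log C.n) * (Real.log C.M / Real.log C.m)

/-- `(M₀, Ñ_1 > ⋯ > Ñ_{M₀}, R_1, …, R_{M₀})` are the parameters of the carpet: `Ñ` lists the
distinct values among the column counts in strictly decreasing order, and `R î` is the number
of nonempty columns whose count equals `Ñ î`. -/
def HasParams (M0 : ℕ) (Nt R : Fin M0 → ℕ) : Prop :=
  (∀ i j : Fin M0, i < j → Nt j < Nt i) ∧
  (∀ i : Fin M0, 0 < R i) ∧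
  (∀ c ∈ C.cols, ∃ i : Fin M0, C.colCount c = Nt i) ∧
  (∀ i : Fin M0, R i = (C.cols.filter fun c => C.colCount c = Nt i).card)

/-- `ψ_{ī|k}(s) = M^{kγ}·n^{−sk}·∏_{ℓ=1}^k N_{i_ℓ}` for a word `ī` of length `J` over the
alphabet of nonempty columns. -/
def psi (s : ℝ) {J : ℕ} (w : Fin J → {c // c ∈ C.cols}) (k : ℕ) : ℝ :=
  (C.M : ℝ) ^ ((k : ℝ) * C.gamma) * (C.n : ℝ) ^ (-(s * (k : ℝ))) *
    ∏ l ∈ Finset.univ.filter (fun l : Fin J => (l : ℕ) < k), (C.colCount (w l).1 : ℝ)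

/-- `Ψ_J(s) = ∑_{ī} min_{0 ≤ k ≤ J} ψ_{ī|k}(s)`. -/
def Psi (J : ℕ) (s : ℝ) : ℝ :=
  ∑ w : Fin J → {c // c ∈ C.cols}, ⨅ k : Fin (J + 1), C.psi s w (k : ℕ)

open Classical in
/-- `∑_{ī : ψ_{ī|J}(s) ≤ 1} ψ_{ī|J}(s)`. -/
def psiSumLe (s : ℝ) (J : ℕ) : ℝ :=
  ∑ w : Fin J → {c // c ∈ C.cols}, if C.psi s w J ≤ 1 then C.psi s w J else 0

/-- `H(Q*_t)`: the maximal entropy of a probability vector `q` on the nonempty columns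
subject to `∑_ĵ q_ĵ log N_ĵ = t`. -/
def entMax (t : ℝ) : ℝ :=
  sSup { h : ℝ | ∃ q : Fin C.m → ℝ, (∀ j, 0 ≤ q j) ∧ (∀ j ∉ C.cols, q j = 0) ∧
    (∑ j ∈ C.cols, q j) = 1 ∧ (∑ j ∈ C.cols, q j * Real.log (C.colCount j)) = t ∧
    h = -∑ j ∈ C.cols, q j * Real.log (q j) }

/-- A probability vector on the nonempty columns. -/
def IsProbVec (p : Fin C.m → ℝ) : Prop :=
  (∀ j, 0 ≤ p j) ∧ (∀ j ∉ C.cols, p j = 0) ∧ (∑ j ∈ C.cols, p j) = 1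

/-- `∑_ĵ p_ĵ log N_ĵ`. -/
def colAvg (p : Fin C.m → ℝ) : ℝ := ∑ j ∈ C.cols, p j * Real.log (C.colCount j)

/-- The relative entropy `H(p‖P)` where `P = (N_1/N, …, N_M/N)`. -/
def relEntP (p : Fin C.m → ℝ) : ℝ :=
  ∑ j ∈ C.cols, p j * Real.log (p j / ((C.colCount j : ℝ) / (C.N : ℝ)))

/-- The relative entropy `H(p‖Q)` where `Q = (1/M, …, 1/M)`. -/
def relEntQ (p : Fin C.m → ℝ) : ℝ :=
  ∑ j ∈ C.cols, p j * Real.log (p j / (1 / (C.M : ℝ)))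

/-- The function `β(ξ)` of the multifractal spectrum of the uniform self-affine measure. -/
def beta (ξ : ℝ) : ℝ :=
  (1 / Real.log C.m) * (-(ξ * Real.log C.N) +
    Real.log (∑ j ∈ C.cols, (C.colCount j : ℝ) ^ (C.gamma⁻¹ + (1 - C.gamma⁻¹) * ξ)))

/-- `f(α) = inf_ξ (αξ + β(ξ))`. -/
def fspec (α : ℝ) : ℝ := ⨅ ξ : ℝ, (α * ξ + C.beta ξ)

end BMData

/-- The lower `θ`-intermediate dimension of a set in a metric space. -/
def lowerInterDim {X : Type*} [MetricSpace X] (θ : ℝ) (F : Set X) : ℝ :=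
  sInf { s : ℝ | 0 ≤ s ∧ ∀ ε > 0, ∀ δ₀ > 0, ∃ δ : ℝ, 0 < δ ∧ δ ≤ δ₀ ∧
    ∃ 𝒰 : Set (Set X), 𝒰.Countable ∧ F ⊆ ⋃₀ 𝒰 ∧
      (∀ U ∈ 𝒰, δ ^ (1 / θ) ≤ Metric.diam U ∧ Metric.diam U ≤ δ) ∧
      (∑' U : 𝒰, ENNReal.ofReal (Metric.diam (U : Set X) ^ s)) ≤ ENNReal.ofReal ε }

/-- The upper `θ`-intermediate dimension of a set in a metric space. -/
def upperInterDim {X : Type*} [MetricSpace X] (θ : ℝ) (F : Set X) : ℝ :=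
  sInf { s : ℝ | 0 ≤ s ∧ ∀ ε > 0, ∃ δ₀ > 0, ∀ δ : ℝ, 0 < δ → δ ≤ δ₀ →
    ∃ 𝒰 : Set (Set X), 𝒰.Countable ∧ F ⊆ ⋃₀ 𝒰 ∧
      (∀ U ∈ 𝒰, δ ^ (1 / θ) ≤ Metric.diam U ∧ Metric.diam U ≤ δ) ∧
      (∑' U : 𝒰, ENNReal.ofReal (Metric.diam (U : Set X) ^ s)) ≤ ENNReal.ofReal ε }

/-- The topological support of a Borel measure: the set of points all of whose
neighbourhoods have positive measure. -/
def measSupport {X : Type*} [MetricSpace X] [MeasurableSpace X] (μ : Measure X) : Set X :=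
  { x | ∀ r : ℝ, 0 < r → 0 < μ (Metric.ball x r) }

/-- `S^s_{δ,θ}(F)`: the infimal `s`-cost of a countable cover of `F` by sets of diameter
between `δ^{1/θ}` and `δ`. -/
def interCost {X : Type*} [MetricSpace X] (F : Set X) (θ s δ : ℝ) : ℝ≥0∞ :=
  sInf { c : ℝ≥0∞ | ∃ 𝒰 : Set (Set X), 𝒰.Countable ∧ F ⊆ ⋃₀ 𝒰 ∧
    (∀ U ∈ 𝒰, δ ^ (1 / θ) ≤ Metric.diam U ∧ Metric.diam U ≤ δ) ∧
    c = ∑' U : 𝒰, ENNReal.ofReal (Metric.diam (U : Set X) ^ s) }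



/-- Auxiliary: `hfun C t l = l*t - log ∑_j N_j^l`. -/
def hfun (C : BMData) (t : ℝ) (l : ℝ) : ℝ :=
  l * t - Real.log (∑ j ∈ C.cols, (C.colCount j : ℝ) ^ l)

theorem mySup_add {ι : Type*} [Nonempty ι] (f : ι → ℝ) (hb : BddAbove (Set.range f))
    (a : ℝ) : (⨆ i, f i + a) = (⨆ i, f i) + a := by
  have hb' : BddAbove (Set.range fun i => f i + a) := by
    obtain ⟨B, hB⟩ := hb
    refine ⟨B + a, ?_⟩
    rintro x ⟨i, rfl⟩
    exact add_le_add (hB ⟨i, rfl⟩) le_rfl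
  apply le_antisymm
  · exact ciSup_le fun i => add_le_add (le_ciSup hb i) le_rfl
  · have h1 : (⨆ i, f i) ≤ (⨆ i, f i + a) - a :=
      ciSup_le fun i => le_sub_iff_add_le.2 (le_ciSup hb' i)
    linarith


/-- **Proposition (rate function and multifractal spectrum).** With
`β(ξ) = (1/log m)(−ξ log N + log ∑_î N_î^{γ⁻¹+(1−γ⁻¹)ξ})` and `f(α) = inf_ξ (αξ + β(ξ))`,
for every `t ∈ (min_î log N_î, max_î log N_î)`:
`I(t) = −(log m)·f(log N/log m − (1/log m − 1/log n)·t) + t/γ + log M`. -/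
theorem statement11 (C : BMData) (hnu : C.NonUniform) (t : ℝ)
    (ht1 : (⨅ j : {c // c ∈ C.cols}, Real.log (C.colCount j.1)) < t)
    (ht2 : t < ⨆ j : {c // c ∈ C.cols}, Real.log (C.colCount j.1)) :
    C.rate t =
      -(Real.log C.m) * C.fspec (Real.log C.N / Real.log C.m
          - (1 / Real.log C.m - 1 / Real.log C.n) * t)
        + t / C.gamma + Real.log C.M := by
  classical
  set A0 : ℝ := Real.log C.N / Real.log C.m - (1 / Real.log C.m - 1 / Real.log C.n) * t with hA0
  have hm1 : (1 : ℕ) < C.m := lt_of_lt_of_le one_lt_two C.two_le_m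
  have hn1 : (1 : ℕ) < C.n := hm1.trans C.m_lt_n
  have logm_pos : 0 < Real.log C.m := Real.log_pos (by exact_mod_cast hm1)
  have logn_pos : 0 < Real.log C.n := Real.log_pos (by exact_mod_cast hn1)
  have logmn : Real.log C.m < Real.log C.n :=
    Real.log_lt_log (by positivity) (by exact_mod_cast C.m_lt_n)
  have hcols : C.cols.Nonempty := Finset.card_pos.mp (lt_trans Nat.zero_lt_one C.one_lt_cols)
  have : Nonempty {c // c ∈ C.cols} := ⟨⟨hcols.choose, hcols.choose_spec⟩⟩
  have hM1 : (1 : ℝ) < C.M := by exact_mod_cast C.one_lt_cols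
  have hM0 : (C.M : ℝ) ≠ 0 := by positivity
  have hcc : ∀ j ∈ C.cols, (0 : ℝ) < C.colCount j := by
    intro j hj
    obtain ⟨p, hp, hpj⟩ := Finset.mem_image.mp hj
    have : 0 < C.colCount j :=
      Finset.card_pos.mpr ⟨p, Finset.mem_filter.mpr ⟨hp, hpj⟩⟩
    exact_mod_cast this
  have hS : ∀ l : ℝ, 0 < ∑ j ∈ C.cols, (C.colCount j : ℝ) ^ l := fun l =>
    Finset.sum_pos (fun j hj => Real.rpow_pos_of_pos (hcc j hj) l) hcols
  -- h ≤ 0 everywhere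
  obtain ⟨jb, hjb⟩ := exists_eq_ciSup_of_finite
    (f := fun j : {c // c ∈ C.cols} => Real.log (C.colCount j.1))
  obtain ⟨ja, hja⟩ := exists_eq_ciInf_of_finite
    (f := fun j : {c // c ∈ C.cols} => Real.log (C.colCount j.1))
  have htb : t < Real.log (C.colCount jb.1) := by rw [hjb]; exact ht2
  have hta : Real.log (C.colCount ja.1) < t := by rw [hja]; exact ht1
  have hkey : ∀ (l : ℝ) (j : {c // c ∈ C.cols}),
      l * Real.log (C.colCount j.1) ≤ Real.log (∑ j ∈ C.cols, (C.colCount j : ℝ) ^ l) := by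
    intro l j
    have h1 : ((C.colCount j.1 : ℝ)) ^ l ≤ ∑ j ∈ C.cols, (C.colCount j : ℝ) ^ l :=
      Finset.single_le_sum (fun i hi => (Real.rpow_pos_of_pos (hcc i hi) l).le) j.2
    have h2 := Real.log_le_log (Real.rpow_pos_of_pos (hcc j.1 j.2) l) h1
    rwa [Real.log_rpow (hcc j.1 j.2)] at h2
  have hle : ∀ l : ℝ, hfun C t l ≤ 0 := by
    intro l
    rcases le_or_gt 0 l with hl | hl
    · have h1 := hkey l jb
      have h2 : l * t ≤ l * Real.log (C.colCount jb.1) :=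
        mul_le_mul_of_nonneg_left htb.le hl
      simp only [hfun]; linarith
    · have h1 := hkey l ja
      have h2 : l * t ≤ l * Real.log (C.colCount ja.1) :=
        mul_le_mul_of_nonpos_left hta.le hl.le
      simp only [hfun]; linarith
  have hbdd : BddAbove (Set.range (hfun C t)) := ⟨0, by rintro x ⟨l, rfl⟩; exact hle l⟩
  -- rate in terms of hfun
  have hrate : C.rate t = (⨆ l : ℝ, hfun C t l) + Real.log C.M := by
    rw [← mySup_add (hfun C t) hbdd, BMData.rate]
    refine iSup_congr fun l => ?_
    rw [one_div, Real.log_mul (inv_ne_zero hM0) (hS l).ne', Real.log_inv]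
    simp only [hfun]; ring
  -- fspec side
  have hfs : -(Real.log C.m) * C.fspec A0 =
      ⨆ ξ : ℝ, -(Real.log C.m) * (A0 * ξ + C.beta ξ) := by
    rw [BMData.fspec]
    exact Real.mul_iInf_of_nonpos (neg_nonpos.mpr logm_pos.le) _
  have hpt : ∀ ξ : ℝ, -(Real.log C.m) * (A0 * ξ + C.beta ξ)
      = hfun C t (C.gamma⁻¹ + (1 - C.gamma⁻¹) * ξ) - t / C.gamma := by
    intro ξ
    simp only [BMData.beta, hfun, hA0]
    set L := Real.log (∑ j ∈ C.cols, (C.colCount j : ℝ) ^ (C.gamma⁻¹ + (1 - C.gamma⁻¹) * ξ))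
      with hL
    simp only [BMData.gamma, inv_div]
    field_simp
    ring
  have hginv : C.gamma⁻¹ < 1 := by
    rw [BMData.gamma, inv_div]
    exact (div_lt_one logn_pos).2 logmn
  have esurj : Function.Surjective (fun ξ : ℝ => C.gamma⁻¹ + (1 - C.gamma⁻¹) * ξ) := by
    intro y
    refine ⟨(y - C.gamma⁻¹) / (1 - C.gamma⁻¹), ?_⟩
    have hne : (1 - C.gamma⁻¹) ≠ 0 := by linarith
    show C.gamma⁻¹ + (1 - C.gamma⁻¹) * ((y - C.gamma⁻¹) / (1 - C.gamma⁻¹)) = y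
    rw [mul_comm, div_mul_cancel₀ _ hne]
    ring
  have hre : (⨆ ξ : ℝ, -(Real.log C.m) * (A0 * ξ + C.beta ξ))
      = ⨆ l : ℝ, (hfun C t l - t / C.gamma) := by
    have heq : (fun ξ : ℝ => -(Real.log C.m) * (A0 * ξ + C.beta ξ))
        = (fun l : ℝ => hfun C t l - t / C.gamma) ∘
            (fun ξ : ℝ => C.gamma⁻¹ + (1 - C.gamma⁻¹) * ξ) := funext hpt
    rw [iSup, iSup, heq, esurj.range_comp]
  have hsub : (⨆ l : ℝ, (hfun C t l - t / C.gamma)) = (⨆ l : ℝ, hfun C t l) - t / C.gamma := by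
    simp only [sub_eq_add_neg]
    exact mySup_add (hfun C t) hbdd _
  rw [hrate, hfs, hre, hsub]
  ring
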